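/- Let G be a finite cut group whose Sylow 2-subgroups are isomorphic to the quaternion group Q8, and let p be an odd prime. If a ∈ G has order 4p^n with n ≥ 1, then every 2-element of N_G(⟨a⟩) commutes with the p-part a_p of a. -/

import Mathlib

/-- `G` is a cut group: every generator of `⟨g⟩` is conjugate to `g` or `g⁻¹`, for all `g`. -/
def IsCutGroup (G : Type*) [Group G] : Prop :=
  ∀ g h : G, Subgroup.zpowers h = Subgroup.zpowers g → IsConj g h ∨ IsConj g⁻¹ h

lemma q8_sq : ∀ g h : QuaternionGroup 2, h^2 ≠ 1 → (g^2 = 1 ∨ g^2 = h^2) := by decide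

lemma q8_mem : ∀ g h : QuaternionGroup 2, h^2 ≠ 1 → g*h = h*g →
    (g = 1 ∨ g = h ∨ g = h^2 ∨ g = h^3) := by decide

lemma pair_lemma {G : Type} [Group G] [Finite G]
    (hQ8 : ∀ P : Sylow 2 G, Nonempty (P ≃* QuaternionGroup 2))
    (b x : G) (hb : orderOf b = 4) {k : ℕ} (hk : orderOf x = 2 ^ k)
    (m : ℤ) (hconj : x * b * x⁻¹ = b ^ m) :
    (x ^ 2 = 1 ∨ x ^ 2 = b ^ 2) ∧ (Commute x b → x ∈ Subgroup.zpowers b) := by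
  have hxn : x ∈ Subgroup.normalizer (Subgroup.zpowers b : Set G) := by
    apply Subgroup.mem_normalizer_fintype
    intro g hg
    obtain ⟨t, rfl⟩ := hg
    show x * b ^ t * x⁻¹ ∈ Subgroup.zpowers b
    rw [← conj_zpow, hconj, ← zpow_mul]
    exact Subgroup.zpow_mem_zpowers b _
  have hPb : IsPGroup 2 (Subgroup.zpowers b) :=
    IsPGroup.of_card (n := 2) (by rw [Nat.card_zpowers, hb]; norm_num)
  have hPx : IsPGroup 2 (Subgroup.zpowers x) :=
    IsPGroup.of_card (n := k) (by rw [Nat.card_zpowers, hk])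
  have hsup : IsPGroup 2 (Subgroup.zpowers x ⊔ Subgroup.zpowers b : Subgroup G) :=
    IsPGroup.to_sup_of_normal_right' hPx hPb (Subgroup.zpowers_le.mpr hxn)
  obtain ⟨P, hP⟩ := hsup.exists_le_sylow
  obtain ⟨e⟩ := hQ8 P
  have hbP : b ∈ (P : Subgroup G) :=
    hP (Subgroup.mem_sup_right (Subgroup.mem_zpowers b))
  have hxP : x ∈ (P : Subgroup G) :=
    hP (Subgroup.mem_sup_left (Subgroup.mem_zpowers x))
  set bP : (P : Subgroup G) := ⟨b, hbP⟩
  set xP : (P : Subgroup G) := ⟨x, hxP⟩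
  have hbo : (e bP)^2 ≠ 1 := by
    intro h
    have : bP ^ 2 = 1 := e.injective (by rw [map_pow, h, map_one])
    have hb2 : b ^ 2 = 1 := congrArg Subtype.val this
    have := orderOf_dvd_of_pow_eq_one hb2
    rw [hb] at this
    omega
  constructor
  · rcases q8_sq (e xP) (e bP) hbo with h | h
    · left
      have : xP ^ 2 = 1 := e.injective (by rw [map_pow, h, map_one])
      exact congrArg Subtype.val this
    · right
      have : xP ^ 2 = bP ^ 2 := e.injective (by rw [map_pow, map_pow, h])
      exact congrArg Subtype.val this
  · intro hc
    have hcP : (e xP) * (e bP) = (e bP) * (e xP) := by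
      rw [← map_mul, ← map_mul]
      congr 1
      exact Subtype.ext hc
    rcases q8_mem (e xP) (e bP) hbo hcP with h | h | h | h
    · have : xP = 1 := e.injective (by rw [h, map_one])
      have : x = 1 := congrArg Subtype.val this
      rw [this]; exact Subgroup.one_mem _
    · have : xP = bP := e.injective h
      have hx : x = b := congrArg Subtype.val this
      rw [hx]; exact Subgroup.mem_zpowers b
    · have : xP = bP ^ 2 := e.injective (by rw [h, map_pow])
      have hx : x = b ^ 2 := congrArg Subtype.val this
      rw [hx]; exact Subgroup.npow_mem_zpowers b 2
    · have : xP = bP ^ 3 := e.injective (by rw [h, map_pow])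
      have hx : x = b ^ 3 := congrArg Subtype.val this
      rw [hx]; exact Subgroup.npow_mem_zpowers b 3

theorem stmt_14 {G : Type} [Group G] [Finite G] (hcut : IsCutGroup G)
    (hQ8 : ∀ P : Sylow 2 G, Nonempty (P ≃* QuaternionGroup 2))
    {p : ℕ} (hp : p.Prime) (hpodd : p ≠ 2)
    {n : ℕ} (hn : 1 ≤ n) (a : G) (ha : orderOf a = 4 * p ^ n)
    (a2 ap : G) (hdecomp : a = a2 * ap) (hcomm : Commute a2 ap)
    (ha2 : orderOf a2 = 4) (hap : orderOf ap = p ^ n) :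
    ∀ x ∈ Subgroup.normalizer (Subgroup.zpowers a : Set G), (∃ k : ℕ, orderOf x = 2 ^ k) →
      Commute x ap := by
  intro x hxnorm hx2
  obtain ⟨k, hk⟩ := hx2
  have hp3 : 3 ≤ p := by have := hp.two_le; rcases Nat.lt_or_ge p 3 with h | h; · omega
                         · exact h
  have hpn3 : 3 ≤ p ^ n := le_trans hp3 (Nat.le_self_pow (by omega) p)
  have hpn_odd : Odd (p ^ n) := (hp.odd_of_ne_two hpodd).pow
  -- a2 as a power of a
  have he2mod : p ^ (2 * n) % 4 = 1 := by
    obtain ⟨q, hq⟩ := hpn_odd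
    have h1 : p ^ (2 * n) = (p ^ n) ^ 2 := by rw [mul_comm, pow_mul]
    rw [h1, hq]
    have : (2 * q + 1) ^ 2 = 4 * (q * q + q) + 1 := by ring
    omega
  have ha2eq : a2 = a ^ (p ^ (2 * n)) := by
    have h1 : a ^ (p ^ (2*n)) = a2 ^ (p ^ (2*n)) * ap ^ (p ^ (2*n)) := by
      rw [hdecomp, hcomm.mul_pow]
    have h2 : ap ^ (p ^ (2*n)) = 1 := by
      apply orderOf_dvd_iff_pow_eq_one.mp
      rw [hap]; exact pow_dvd_pow p (by omega)
    have h3 : a2 ^ (p ^ (2*n)) = a2 := by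
      conv_rhs => rw [← pow_one a2]
      rw [pow_eq_pow_iff_modEq, ha2]
      unfold Nat.ModEq
      omega
    rw [h1, h2, h3, mul_one]
  have ha2z : a2 = a ^ ((p ^ (2*n) : ℕ) : ℤ) := by rw [zpow_natCast]; exact ha2eq
  -- the exponent m
  have hxa : x * a * x⁻¹ ∈ Subgroup.zpowers a :=
    (Subgroup.mem_normalizer_iff.mp hxnorm a).mp (Subgroup.mem_zpowers a)
  obtain ⟨m, hm⟩ := Subgroup.mem_zpowers_iff.mp hxa
  have hconja : x * a * x⁻¹ = a ^ m := hm.symm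
  have hconj2 : x * a2 * x⁻¹ = a2 ^ m := by
    rw [ha2z, ← conj_zpow, hconja, ← zpow_mul, mul_comm m, zpow_mul]
  have hconjp : x * ap * x⁻¹ = ap ^ m := by
    have hapz : ap = a2⁻¹ * a := by rw [hdecomp]; group
    have h1 : x * ap * x⁻¹ = (x * a2 * x⁻¹)⁻¹ * (x * a * x⁻¹) := by rw [hapz]; group
    have h2 : a ^ m = a2 ^ m * ap ^ m := by rw [hdecomp, hcomm.mul_zpow]
    rw [h1, hconj2, hconja, h2, ← mul_assoc, inv_mul_cancel, one_mul]
  -- m is odd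
  have hmodd : ¬ (2:ℤ) ∣ m := by
    rintro ⟨c, hc⟩
    have h4 : a2 ^ (4:ℤ) = 1 := by
      have h := pow_orderOf_eq_one a2
      rw [ha2] at h
      rw [show (4:ℤ) = ((4:ℕ):ℤ) from rfl, zpow_natCast]
      exact h
    have h1 : x * a2 ^ (2:ℤ) * x⁻¹ = 1 := by
      rw [← conj_zpow, hconj2, ← zpow_mul]
      rw [show m * 2 = 4 * c from by rw [hc]; ring, zpow_mul, h4, one_zpow]
    have h2 : a2 ^ (2:ℤ) = 1 := by
      have := congrArg (fun g => x⁻¹ * g * x) h1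
      simpa [mul_assoc] using this
    have h3 := orderOf_dvd_iff_zpow_eq_one.mpr h2
    rw [ha2] at h3
    norm_num at h3
  -- the Q8 pair lemma for x and a2
  obtain ⟨hsq, hcen⟩ := pair_lemma hQ8 a2 x ha2 hk m hconj2
  -- x^2 commutes with ap, so p^n divides m^2 - 1
  have hx2comm : Commute (x ^ 2) ap := by
    rcases hsq with h | h
    · rw [h]; exact Commute.one_left ap
    · rw [h]; exact hcomm.pow_left 2
  have hap2 : ap ^ (m * m) = ap := by
    have h1 : x ^ 2 * ap * (x ^ 2)⁻¹ = ap ^ (m * m) := by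
      have h0 : x ^ 2 * ap * (x ^ 2)⁻¹ = x * (x * ap * x⁻¹) * x⁻¹ := by
        rw [pow_two, mul_inv_rev]
        simp [mul_assoc]
      rw [h0, hconjp, ← conj_zpow, hconjp, ← zpow_mul]
    have h2 : x ^ 2 * ap * (x ^ 2)⁻¹ = ap := by rw [hx2comm.eq]; group
    rw [← h1, h2]
  have hpdvd : ((p:ℤ))^n ∣ (m - 1) * (m + 1) := by
    have h1 : ap ^ (m * m) = ap ^ (1:ℤ) := by rw [zpow_one]; exact hap2
    have h2 := orderOf_dvd_sub_iff_zpow_eq_zpow.mpr h1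
    rw [hap] at h2
    have h3 : (m - 1) * (m + 1) = m * m - 1 := by ring
    rw [h3]
    exact_mod_cast h2
  have hpZ : Prime ((p:ℤ)) := Nat.prime_iff_prime_int.mp hp
  have hpnotdvd2 : ¬ ((p:ℤ)) ∣ 2 := by
    intro h
    have : (p:ℤ) ∣ ((2:ℕ):ℤ) := by exact_mod_cast h
    have := Int.natCast_dvd_natCast.mp this
    have := Nat.le_of_dvd (by norm_num) this
    omega
  have hcase : ((p:ℤ)^n ∣ m - 1) ∨ ((p:ℤ)^n ∣ m + 1) := by
    by_cases hd1 : (p:ℤ) ∣ m - 1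
    · left
      have hnd : ¬ (p:ℤ) ∣ m + 1 := by
        intro h
        apply hpnotdvd2
        have h2 := dvd_sub h hd1
        rwa [show m + 1 - (m - 1) = (2:ℤ) from by ring] at h2
      have hcop : IsCoprime ((p:ℤ)^n) (m+1) :=
        (hpZ.coprime_iff_not_dvd.mpr hnd).pow_left
      exact hcop.dvd_of_dvd_mul_right hpdvd
    · right
      have hcop : IsCoprime ((p:ℤ)^n) (m-1) :=
        (hpZ.coprime_iff_not_dvd.mpr hd1).pow_left
      apply hcop.dvd_of_dvd_mul_right
      rwa [mul_comm] at hpdvd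
  rcases hcase with hpos | hneg
  · -- p^n ∣ m - 1 : done
    have h1 : ap ^ m = ap := by
      have h2 : ap ^ m = ap ^ (1:ℤ) := by
        apply orderOf_dvd_sub_iff_zpow_eq_zpow.mp
        rw [hap]
        exact_mod_cast hpos
      rw [h2, zpow_one]
    rw [h1] at hconjp
    have := congrArg (fun g => g * x) hconjp
    exact (by simpa [mul_assoc] using this : x * ap = ap * x)
  -- p^n ∣ m + 1
  by_cases h41 : (4:ℤ) ∣ m - 1
  · -- x commutes with a2, hence x ∈ ⟨a2⟩, hence commutes with ap
    have ha2m : a2 ^ m = a2 := by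
      have h2 : a2 ^ m = a2 ^ (1:ℤ) := by
        apply orderOf_dvd_sub_iff_zpow_eq_zpow.mp
        rw [ha2]
        exact_mod_cast h41
      rw [h2, zpow_one]
    have hxc : Commute x a2 := by
      rw [ha2m] at hconj2
      have := congrArg (fun g => g * x) hconj2
      exact (by simpa [mul_assoc] using this : x * a2 = a2 * x)
    obtain ⟨t, ht⟩ := Subgroup.mem_zpowers_iff.mp (hcen hxc)
    rw [← ht]
    exact hcomm.zpow_left t
  · -- now m ≡ -1 mod 4 and mod p^n, so x inverts a; derive a contradiction
    exfalso
    have h4 : (4:ℤ) ∣ m + 1 := by omega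
    have hcop4 : IsCoprime (4:ℤ) ((p:ℤ)^n) := by
      have hc0 : Nat.Coprime p 4 := hp.coprime_iff_not_dvd.mpr (by
        intro hdvd
        have h2 : p ∣ 2 := hp.dvd_of_dvd_pow ((show (4:ℕ) = 2^2 by norm_num) ▸ hdvd)
        exact hpodd ((Nat.prime_dvd_prime_iff_eq hp Nat.prime_two).mp h2))
      have hc1 : Nat.Coprime 4 (p ^ n) := (hc0.symm).pow_right n
      have h3 := Nat.isCoprime_iff_coprime.mpr hc1
      push_cast at h3
      exact h3
    have hNdvd : ((4 * p^n : ℕ) : ℤ) ∣ m + 1 := by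
      push_cast
      exact hcop4.mul_dvd h4 hneg
    have hxinv : x * a * x⁻¹ = a⁻¹ := by
      rw [hconja, ← zpow_neg_one]
      apply orderOf_dvd_sub_iff_zpow_eq_zpow.mp
      rw [ha]
      rwa [show m - (-1) = m + 1 from by ring]
    obtain ⟨u, hu1, hu2⟩ : ∃ u : ℤ, (4:ℤ) ∣ u - 1 ∧ (p:ℤ)^n ∣ u + 1 := by
      obtain ⟨s, t, hst⟩ := hcop4
      exact ⟨1 - 8 * s, ⟨-2*s, by ring⟩, ⟨2*t, by linear_combination (-2)*hst⟩⟩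
    have husq : ((4 * p^n : ℕ) : ℤ) ∣ u * u - 1 := by
      have h := mul_dvd_mul hu1 hu2
      rw [show (u-1)*(u+1) = u*u - 1 from by ring] at h
      push_cast
      exact h
    have hgen : Subgroup.zpowers (a ^ u) = Subgroup.zpowers a := by
      apply le_antisymm
      · exact Subgroup.zpowers_le.mpr (Subgroup.zpow_mem_zpowers a u)
      · apply Subgroup.zpowers_le.mpr
        apply Subgroup.mem_zpowers_iff.mpr
        refine ⟨u, ?_⟩
        rw [← zpow_mul]
        have h1 : a ^ (u*u) = a ^ (1:ℤ) := by
          apply orderOf_dvd_sub_iff_zpow_eq_zpow.mp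
          rw [ha]
          exact husq
        rw [h1, zpow_one]
    obtain ⟨w, hw⟩ : ∃ w : G, w * a * w⁻¹ = a ^ u := by
      rcases hcut a (a ^ u) hgen with hc | hc
      · obtain ⟨c, hc⟩ := isConj_iff.mp hc
        exact ⟨c, hc⟩
      · obtain ⟨c, hc⟩ := isConj_iff.mp hc
        refine ⟨c * x, ?_⟩
        have h1 : (c * x) * a * (c * x)⁻¹ = c * (x * a * x⁻¹) * c⁻¹ := by group
        rw [h1, hxinv, hc]
    have hiter : ∀ d : ℕ, w ^ d * a * (w ^ d)⁻¹ = a ^ (u ^ d) := by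
      intro d
      induction d with
      | zero => simp
      | succ d ih =>
        have h1 : w ^ (d+1) * a * (w ^ (d+1))⁻¹ = w * (w ^ d * a * (w ^ d)⁻¹) * w⁻¹ := by
          group
        rw [h1, ih, ← conj_zpow, hw, ← zpow_mul, pow_succ, mul_comm]
    have hM0 : orderOf w ≠ 0 := (orderOf_pos w).ne'
    set kk := (orderOf w).factorization 2 with hkk
    set d := orderOf w / 2 ^ kk with hd
    have hdodd : ¬ 2 ∣ d := Nat.not_dvd_ordCompl Nat.prime_two hM0
    have hddvd : d ∣ orderOf w := Nat.ordCompl_dvd (orderOf w) 2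
    have hdpos : 0 < d := Nat.ordCompl_pos 2 hM0
    have hyorder : orderOf (w ^ d) = 2 ^ kk := by
      rw [orderOf_pow, Nat.gcd_eq_right hddvd]
      have hmul := Nat.ordProj_mul_ordCompl_eq_self (orderOf w) 2
      rw [← hkk, ← hd] at hmul
      rw [← hmul, Nat.mul_div_cancel _ hdpos]
    have hyconj : w ^ d * a * (w ^ d)⁻¹ = a ^ u := by
      rw [hiter d]
      obtain ⟨c, hc⟩ : ∃ c, d = 2*c + 1 := ⟨d/2, by omega⟩
      have hdd : ((4 * p^n : ℕ) : ℤ) ∣ u ^ d - u := by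
        have h2 : u * u - 1 ∣ (u^2)^c - 1 := by
          have h3 := sub_dvd_pow_sub_pow (u^2) 1 c
          rw [one_pow] at h3
          rwa [show u^2 - 1 = u*u - 1 from by ring] at h3
        have h3 : ((4 * p^n : ℕ) : ℤ) ∣ (u^2)^c - 1 := husq.trans h2
        rw [show u ^ d - u = u * ((u^2)^c - 1) from by rw [hc]; ring]
        exact h3.mul_left u
      apply orderOf_dvd_sub_iff_zpow_eq_zpow.mp
      rw [ha]
      exact hdd
    have hyconj2 : w ^ d * a2 * (w ^ d)⁻¹ = a2 ^ u := by
      rw [ha2z, ← conj_zpow, hyconj, ← zpow_mul, mul_comm u, zpow_mul]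
    have ha2u : a2 ^ u = a2 := by
      have h2 : a2 ^ u = a2 ^ (1:ℤ) := by
        apply orderOf_dvd_sub_iff_zpow_eq_zpow.mp
        rw [ha2]
        exact_mod_cast hu1
      rw [h2, zpow_one]
    have hyc : Commute (w ^ d) a2 := by
      have h1 := hyconj2
      rw [ha2u] at h1
      have h2 := congrArg (fun g => g * (w ^ d)) h1
      exact (by simpa [mul_assoc] using h2 : w ^ d * a2 = a2 * w ^ d)
    obtain ⟨-, hceny⟩ := pair_lemma hQ8 a2 (w ^ d) ha2 hyorder u hyconj2
    obtain ⟨t2, ht2⟩ := Subgroup.mem_zpowers_iff.mp (hceny hyc)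
    have hya : Commute (w ^ d) a := by
      rw [← ht2, ha2z]
      exact ((Commute.refl a).zpow_left _).zpow_left t2
    have hau : a ^ u = a := by
      rw [← hyconj, hya.eq]
      group
    have hdivu : ((4 * p^n : ℕ) : ℤ) ∣ u - 1 := by
      have h2 : a ^ u = a ^ (1:ℤ) := by rw [zpow_one]; exact hau
      have h3 := orderOf_dvd_sub_iff_zpow_eq_zpow.mpr h2
      rwa [ha] at h3
    have hpn_u1 : (p:ℤ)^n ∣ u - 1 := by
      refine dvd_trans ⟨4, by push_cast; ring⟩ hdivu
    have hfin : (p:ℤ)^n ∣ 2 := by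
      have h2 := dvd_sub hu2 hpn_u1
      rwa [show u + 1 - (u - 1) = (2:ℤ) from by ring] at h2
    have h5 : ((p^n : ℕ):ℤ) ∣ ((2:ℕ):ℤ) := by exact_mod_cast hfin
    have h6 := Nat.le_of_dvd (by norm_num) (Int.natCast_dvd_natCast.mp h5)
    omega
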